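/- The environment guard absorbs its own rely assumption: eguar(r) ⋒ rely(r) = eguar(r), where eguar(r) = (π(⊤) ⊓ ε⊥(r))^ω and rely(r) = eguar(r) ; (Nil ⊓ ε(r̄) ; Abort). -/

import Mathlib

namespace Aczel

/-- Atomic steps: program step, environment step (with `none` denoting the
undefined/bottom state `⊥`), or termination marker `✓`. -/
inductive Step (S : Type) where
  | prog : Option S → Step S
  | env  : Option S → Step S
  | term : Step S

/-- Terminal steps `π(⊥)`, `ε(⊥)`, `✓` may occur only last in a trace. -/
def Step.isTerminal {S : Type} : Step S → Prop
  | .prog none => True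
  | .env none  => True
  | .term      => True
  | _          => False

/-- Possibly infinite sequences of steps, as partial functions on ℕ. -/
abbrev RawSeq (S : Type) := ℕ → Option (Step S)

def emptySeq (S : Type) : RawSeq S := fun _ => none

def seq1 {S : Type} (a : Step S) : RawSeq S := fun i => if i = 0 then some a else none

def seq2 {S : Type} (a b : Step S) : RawSeq S :=
  fun i => if i = 0 then some a else if i = 1 then some b else none

/-- `SeqPrefix t₁ t₂`: `t₁` is a prefix of `t₂`. -/
def SeqPrefix {S : Type} (t₁ t₂ : RawSeq S) : Prop :=
  ∀ i s, t₁ i = some s → t₂ i = some s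

def HasLength {S : Type} (t : RawSeq S) (n : ℕ) : Prop :=
  ∀ i, (t i).isSome ↔ i < n

def SeqFinite {S : Type} (t : RawSeq S) : Prop := ∃ n, HasLength t n

/-- `SnocEq t' t x`: `t` is finite and `t' = t ++ [x]`. -/
def SnocEq {S : Type} (t' t : RawSeq S) (x : Step S) : Prop :=
  ∃ n, HasLength t n ∧ (∀ i, i < n → t' i = t i) ∧ t' n = some x ∧ HasLength t' (n + 1)

/-- An Aczel trace: an initial state together with a (finite or infinite)
sequence of steps whose domain is downward closed and in which terminal
steps occur only as the last step. -/
structure Trace (S : Type) where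
  init : S
  steps : RawSeq S
  closed : ∀ i, (steps (i + 1)).isSome → (steps i).isSome
  wf : ∀ i st, steps i = some st → st.isTerminal → steps (i + 1) = none

/-- The trace refinement ordering. -/
def TrLE {S : Type} (tr₁ tr₂ : Trace S) : Prop :=
  tr₁.init = tr₂.init ∧
    (SeqPrefix tr₂.steps tr₁.steps ∨
      ∃ t₃ : RawSeq S, SnocEq tr₁.steps t₃ (Step.prog none) ∧ SeqPrefix t₃ tr₂.steps)

def emptyTrace {S : Type} (σ : S) : Trace S :=
  ⟨σ, emptySeq S, by intro i h; simp [emptySeq] at h, by intro i st h; simp [emptySeq] at h⟩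

/-- The trace `(σ₀, [π(⊥)])`. -/
def botTrace {S : Type} (σ₀ : S) : Trace S :=
  ⟨σ₀, seq1 (Step.prog none),
    by intro i h; simp [seq1] at h,
    by intro i st h _; simp [seq1]⟩

/-- Empty closure: add all empty traces. -/
def emptyClose {S : Type} (s : Set (Trace S)) : Set (Trace S) :=
  s ∪ {tr | tr.steps = emptySeq S}

/-- Prefix closure: empty closure plus all prefixes of traces of `s`. -/
def prefixClose {S : Type} (s : Set (Trace S)) : Set (Trace S) :=
  emptyClose s ∪ {tr | ∃ tr' ∈ s, tr'.init = tr.init ∧ SeqPrefix tr.steps tr'.steps}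

/-- Aborting traces of `s`: those whose extension by `π(⊥)` is in `s`. -/
def aborting {S : Type} (s : Set (Trace S)) : Set (Trace S) :=
  {tr | ∃ tr' ∈ s, tr'.init = tr.init ∧ SnocEq tr'.steps tr.steps (Step.prog none)}

/-- All extensions of traces of `s`. -/
def abortComplete {S : Type} (s : Set (Trace S)) : Set (Trace S) :=
  {tr | ∃ tr' ∈ s, tr'.init = tr.init ∧ SeqPrefix tr'.steps tr.steps}

def abortClose {S : Type} (s : Set (Trace S)) : Set (Trace S) :=
  s ∪ abortComplete (aborting s)

/-- Commands: prefix-closed and abort-closed sets of traces. -/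
def IsCommand {S : Type} (s : Set (Trace S)) : Prop :=
  s = prefixClose s ∧ s = abortClose s

/-- Refinement: `Ref c d` means `c ⊑ d`, i.e. `c ⊇ d`. -/
def Ref {S : Type} (c d : Set (Trace S)) : Prop := d ⊆ c

/-- Atomic program step command `π(r)`. -/
def Pi {S : Type} (r : Set (S × S)) : Set (Trace S) :=
  prefixClose {tr | ∃ p ∈ r, tr.init = p.1 ∧ tr.steps = seq2 (Step.prog (some p.2)) Step.term}

/-- Atomic environment step command `ε(r)`. -/
def Eps {S : Type} (r : Set (S × S)) : Set (Trace S) :=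
  prefixClose {tr | ∃ p ∈ r, tr.init = p.1 ∧ tr.steps = seq2 (Step.env (some p.2)) Step.term}

/-- Test command `τ(p)`. -/
def test {S : Type} (p : Set S) : Set (Trace S) :=
  emptyClose {tr | tr.init ∈ p ∧ tr.steps = seq1 Step.term}

def AbortC (S : Type) : Set (Trace S) := Set.univ

def MagicC (S : Type) : Set (Trace S) := emptyClose (∅ : Set (Trace S))

def NilC (S : Type) : Set (Trace S) := test Set.univ

/-- Environment abort command `⊥_ε`. -/
def EAbortC (S : Type) : Set (Trace S) :=
  emptyClose {tr | tr.steps = seq1 (Step.env none)}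

/-- `ε⊥(r)`: environment step satisfying `r`, or environment abort. -/
def EpsBot {S : Type} (r : Set (S × S)) : Set (Trace S) := Eps r ∪ EAbortC S

/-- Binary nondeterministic choice `⊓` (union, empty closed). -/
def choice {S : Type} (c₁ c₂ : Set (Trace S)) : Set (Trace S) := emptyClose (c₁ ∪ c₂)

/-- Nondeterministic choice over a set of commands `⨅ C`. -/
def NondetInf {S : Type} (C : Set (Set (Trace S))) : Set (Trace S) := emptyClose (⋃₀ C)

/-- Terminated traces of `c`: those ending in `✓`. -/
def terminated {S : Type} (c : Set (Trace S)) : Set (Trace S) :=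
  {tr | tr ∈ c ∧ ∃ t : RawSeq S, SnocEq tr.steps t Step.term}

/-- Terminating traces of `c`, with the final `✓` removed. -/
def terminating {S : Type} (c : Set (Trace S)) : Set (Trace S) :=
  {tr | ∃ tr' ∈ c, tr'.init = tr.init ∧ SnocEq tr'.steps tr.steps Step.term}

/-- `LastState tr σ`: `σ` is the last state of the (finite) trace `tr`. -/
def LastState {S : Type} (tr : Trace S) (σ : S) : Prop :=
  (HasLength tr.steps 0 ∧ σ = tr.init) ∨
    (∃ n s, HasLength tr.steps (n + 1) ∧ tr.steps n = some s ∧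
      (s = Step.prog (some σ) ∨ s = Step.env (some σ)))

/-- Concatenation `s₁ ⌢ s₂` of matching traces. -/
def seqCat {S : Type} (s₁ s₂ : Set (Trace S)) : Set (Trace S) :=
  {tr | ∃ tr₁ ∈ s₁, ∃ tr₂ ∈ s₂, ∃ n, HasLength tr₁.steps n ∧
    LastState tr₁ tr₂.init ∧ tr.init = tr₁.init ∧
    ∀ i, tr.steps i = if i < n then tr₁.steps i else tr₂.steps (i - n)}

/-- Sequential composition `c₁ ; c₂`: the unterminated traces of `c₁`
(abort closed) together with terminating traces of `c₁` (final `✓` removed)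
concatenated with matching traces of `c₂`. -/
def seqComp {S : Type} (c₁ c₂ : Set (Trace S)) : Set (Trace S) :=
  abortClose (c₁ \ terminated c₁) ∪ seqCat (terminating c₁) c₂

/-- Precondition command `pre(p)`. -/
def preC {S : Type} (p : Set S) : Set (Trace S) :=
  choice (test p) (seqComp (test pᶜ) (AbortC S))

/-- Possibly infinite iteration `c^ω = μ x. Nil ⊓ c;x` (least fixed point
w.r.t. refinement, i.e. greatest w.r.t. `⊆`, by Knaster–Tarski). -/
def omegaIter {S : Type} (c : Set (Trace S)) : Set (Trace S) :=
  ⋃₀ {x | x ⊆ choice (NilC S) (seqComp c x)}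

/-- Guarantee command `guar(g) = (π(g) ⊓ ε⊥(⊤))^ω`. -/
def guarC {S : Type} (g : Set (S × S)) : Set (Trace S) :=
  omegaIter (choice (Pi g) (EpsBot Set.univ))

/-- Environment guard `eguar(r) = (π(⊤) ⊓ ε⊥(r))^ω`. -/
def eguarC {S : Type} (r : Set (S × S)) : Set (Trace S) :=
  omegaIter (choice (Pi Set.univ) (EpsBot r))

/-- Rely command `rely(r) = eguar(r) ; (Nil ⊓ ε(r̄) ; Abort)`. -/
def relyC {S : Type} (r : Set (S × S)) : Set (Trace S) :=
  seqComp (eguarC r) (choice (NilC S) (seqComp (Eps rᶜ) (AbortC S)))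

def abortFirst {S : Type} (c₁ c₂ : Set (Trace S)) : Set (Trace S) :=
  abortComplete (aborting c₁ ∩ c₂)

/-- Weak conjunction `c₁ ⋒ c₂`. -/
def wconj {S : Type} (c₁ c₂ : Set (Trace S)) : Set (Trace S) :=
  (c₁ ∩ c₂) ∪ abortFirst c₁ c₂ ∪ abortFirst c₂ c₁

section Aux

variable {S : Type}

lemma hasLength_unique {t : RawSeq S} {m n : ℕ}
    (hm : HasLength t m) (hn : HasLength t n) : m = n := by
  rcases Nat.lt_trichotomy m n with h | h | h
  · exact absurd ((hm m).mp ((hn m).mpr h)) (lt_irrefl m)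
  · exact h
  · exact absurd ((hn n).mp ((hm n).mpr h)) (lt_irrefl n)

/-- `σ` is the state immediately before step `i` of `tr`. -/
def PreAt (tr : Trace S) (i : ℕ) (σ : S) : Prop :=
  (i = 0 ∧ σ = tr.init) ∨
    ∃ j, i = j + 1 ∧
      (tr.steps j = some (Step.prog (some σ)) ∨ tr.steps j = some (Step.env (some σ)))

/-- Closed-form characterisation of `eguar r`. -/
def EG (r : Set (S × S)) : Set (Trace S) :=
  {tr | ∀ i st, tr.steps i = some st →
    st ≠ Step.prog none ∧
      ∀ σ σ', st = Step.env (some σ') → PreAt tr i σ → (σ, σ') ∈ r}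

def Ptw (P : S → ℕ → Step S → Prop) (tr : Trace S) : Prop :=
  ∀ i st, tr.steps i = some st → P tr.init i st

lemma ptw_emptyClose {P : S → ℕ → Step S → Prop} {B : Set (Trace S)}
    (h : ∀ tr ∈ B, Ptw P tr) : ∀ tr ∈ emptyClose B, Ptw P tr := by
  rintro tr (htr | htr)
  · exact h tr htr
  · intro i st hst
    rw [Set.mem_setOf_eq] at htr
    rw [htr] at hst
    simp [emptySeq] at hst

lemma ptw_prefixClose {P : S → ℕ → Step S → Prop} {B : Set (Trace S)}
    (h : ∀ tr ∈ B, Ptw P tr) : ∀ tr ∈ prefixClose B, Ptw P tr := by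
  rintro tr (htr | htr)
  · exact ptw_emptyClose h tr htr
  · obtain ⟨tr', htr', hinit, hpre⟩ := htr
    intro i st hst
    have := h tr' htr' i st (hpre i st hst)
    rwa [hinit] at this

lemma pi_char {g : Set (S × S)} :
    ∀ tr ∈ Pi g, Ptw (fun ini i st =>
      (i = 0 ∧ ∃ σ', st = Step.prog (some σ') ∧ (ini, σ') ∈ g) ∨
      (i = 1 ∧ st = Step.term)) tr := by
  apply ptw_prefixClose
  rintro tr ⟨p, hp, hinit, hsteps⟩ i st hst
  rw [hsteps] at hst
  unfold seq2 at hst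
  split_ifs at hst with h0 h1
  · subst h0
    exact Or.inl ⟨rfl, p.2, (Option.some.inj hst).symm, by rw [hinit]; exact hp⟩
  · subst h1
    exact Or.inr ⟨rfl, (Option.some.inj hst).symm⟩

lemma eps_char {g : Set (S × S)} :
    ∀ tr ∈ Eps g, Ptw (fun ini i st =>
      (i = 0 ∧ ∃ σ', st = Step.env (some σ') ∧ (ini, σ') ∈ g) ∨
      (i = 1 ∧ st = Step.term)) tr := by
  apply ptw_prefixClose
  rintro tr ⟨p, hp, hinit, hsteps⟩ i st hst
  rw [hsteps] at hst
  unfold seq2 at hst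
  split_ifs at hst with h0 h1
  · subst h0
    exact Or.inl ⟨rfl, p.2, (Option.some.inj hst).symm, by rw [hinit]; exact hp⟩
  · subst h1
    exact Or.inr ⟨rfl, (Option.some.inj hst).symm⟩

lemma eabort_char :
    ∀ tr ∈ EAbortC S, Ptw (fun _ i st => i = 0 ∧ st = Step.env none) tr := by
  apply ptw_emptyClose
  rintro tr htr i st hst
  rw [Set.mem_setOf_eq] at htr
  rw [htr] at hst
  unfold seq1 at hst
  split_ifs at hst with h0
  · exact ⟨h0, (Option.some.inj hst).symm⟩

lemma nil_char :
    ∀ tr ∈ NilC S, Ptw (fun _ i st => i = 0 ∧ st = Step.term) tr := by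
  apply ptw_emptyClose
  rintro tr ⟨_, htr⟩ i st hst
  rw [htr] at hst
  unfold seq1 at hst
  split_ifs at hst with h0
  · exact ⟨h0, (Option.some.inj hst).symm⟩

/-- pointwise shape of steps of the atomic body `π(⊤) ⊓ ε⊥(r)`. -/
def CP (r : Set (S × S)) : S → ℕ → Step S → Prop := fun ini i st =>
  (i = 0 ∧ ((∃ σ', st = Step.prog (some σ')) ∨
            (∃ σ', st = Step.env (some σ') ∧ (ini, σ') ∈ r) ∨
            st = Step.env none)) ∨
  (i = 1 ∧ st = Step.term)

lemma c_char {r : Set (S × S)} :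
    ∀ tr ∈ choice (Pi (S := S) Set.univ) (EpsBot r), Ptw (CP r) tr := by
  apply ptw_emptyClose
  rintro tr (htr | htr | htr)
  · intro i st hst
    rcases pi_char tr htr i st hst with ⟨h0, σ', hs, _⟩ | ⟨h1, hs⟩
    · exact Or.inl ⟨h0, Or.inl ⟨σ', hs⟩⟩
    · exact Or.inr ⟨h1, hs⟩
  · intro i st hst
    rcases eps_char tr htr i st hst with ⟨h0, σ', hs, hr⟩ | ⟨h1, hs⟩
    · exact Or.inl ⟨h0, Or.inr (Or.inl ⟨σ', hs, hr⟩)⟩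
    · exact Or.inr ⟨h1, hs⟩
  · intro i st hst
    obtain ⟨h0, hs⟩ := eabort_char tr htr i st hst
    exact Or.inl ⟨h0, Or.inr (Or.inr hs)⟩

lemma CP_prog_ne {r : Set (S × S)} {ini : S} {i : ℕ} {st : Step S}
    (h : CP r ini i st) : st ≠ Step.prog none := by
  rcases h with ⟨_, ⟨σ', hs⟩ | ⟨σ', hs, _⟩ | hs⟩ | ⟨_, hs⟩ <;> subst hs <;> simp

lemma c_terminating_char {r : Set (S × S)} {tr : Trace S}
    (h : tr ∈ terminating (choice (Pi Set.univ) (EpsBot r))) :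
    HasLength tr.steps 1 ∧ ∃ st, tr.steps 0 = some st ∧
      ((∃ σ, st = Step.prog (some σ)) ∨
       (∃ σ, st = Step.env (some σ) ∧ (tr.init, σ) ∈ r)) := by
  obtain ⟨tr', htr', hinit, n, hlt, hagree, hn, hlen⟩ := h
  have hchar := c_char tr' htr'
  rcases hchar n _ hn with ⟨h0, ⟨σ', hs⟩ | ⟨σ', hs, _⟩ | hs⟩ | ⟨h1, _⟩
  · simp at hs
  · simp at hs
  · simp at hs
  · subst h1
    have h0some : (tr'.steps 0).isSome := (hlen 0).mpr (by norm_num)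
    obtain ⟨st, hst⟩ := Option.isSome_iff_exists.mp h0some
    rcases hchar 0 st hst with ⟨_, ⟨σ', hs⟩ | ⟨σ', hs, hr⟩ | hs⟩ | ⟨h01, _⟩
    · refine ⟨hlt, st, ?_, Or.inl ⟨σ', hs⟩⟩
      rw [← hagree 0 one_pos]; exact hst
    · refine ⟨hlt, st, ?_, Or.inr ⟨σ', hs, by rw [← hinit]; exact hr⟩⟩
      rw [← hagree 0 one_pos]; exact hst
    · exfalso
      have hterm : st.isTerminal := by rw [hs]; trivial
      have := tr'.wf 0 st hst hterm
      rw [this] at hn; simp at hn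
    · simp at h01

lemma aborting_empty {s : Set (Trace S)}
    (h : ∀ tr ∈ s, ∀ i, tr.steps i ≠ some (Step.prog none)) : aborting s = ∅ := by
  ext tr
  simp only [aborting, Set.mem_setOf_eq, Set.mem_empty_iff_false, iff_false]
  rintro ⟨tr', htr', _, n, _, _, hn, _⟩
  exact h tr' htr' n hn

end Aux
section Aux2

variable {S : Type}

lemma omega_sub_EG {r : Set (S × S)} {x : Set (Trace S)}
    (hx : x ⊆ choice (NilC S) (seqComp (choice (Pi Set.univ) (EpsBot r)) x)) :
    ∀ i, ∀ tr ∈ x, ∀ st, tr.steps i = some st →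
      st ≠ Step.prog none ∧
        ∀ σ σ', st = Step.env (some σ') → PreAt tr i σ → (σ, σ') ∈ r := by
  intro i
  induction i using Nat.strong_induction_on with
  | _ i IH =>
    intro tr htr st hst
    rcases hx htr with (hnil | hseq) | hempty
    · -- Nil
      obtain ⟨_, hT⟩ := nil_char tr hnil i st hst
      subst hT
      exact ⟨by simp, fun σ σ' h _ => by simp at h⟩
    · rcases hseq with (hc | habt) | hcat
      · -- body, unterminated
        rcases c_char tr hc.1 i st hst with ⟨h0, hcase⟩ | ⟨h1, hT⟩
        · subst h0
          constructor
          · rcases hcase with ⟨σ', hs⟩ | ⟨σ', hs, _⟩ | hs <;> subst hs <;> simp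
          · intro σ σ' hse hpre
            subst hse
            rcases hcase with ⟨σ'', hs⟩ | ⟨σ'', hs, hr⟩ | hs
            · simp at hs
            · simp only [Step.env.injEq, Option.some.injEq] at hs
              subst hs
              rcases hpre with ⟨_, hσ⟩ | ⟨j, hj, _⟩
              · subst hσ; exact hr
              · simp at hj
            · simp at hs
        · subst hT
          exact ⟨by simp, fun σ σ' h _ => by simp at h⟩
      · -- abortComplete of aborting body: impossible
        exfalso
        obtain ⟨tr', htr', _, _⟩ := habt
        obtain ⟨tr'', htr'', _, n, _, _, hn, _⟩ := htr'
        exact CP_prog_ne (c_char tr'' htr''.1 n _ hn) rfl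
      · -- step followed by iteration
        obtain ⟨tr₁, htr₁, tr₂, htr₂, n, hlen1, hlast, hinit, hsteps⟩ := hcat
        obtain ⟨hlt1, a, ha, hshape⟩ := c_terminating_char htr₁
        have hn1 : n = 1 := hasLength_unique hlen1 hlt1
        subst hn1
        rcases Nat.lt_or_ge i 1 with hi | hi
        · have hi0 : i = 0 := by omega
          subst hi0
          rw [hsteps 0, if_pos (by norm_num)] at hst
          have hast : a = st := Option.some.inj (ha.symm.trans hst)
          subst hast
          constructor
          · rcases hshape with ⟨σ, hs⟩ | ⟨σ, hs, _⟩ <;> subst hs <;> simp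
          · intro σ σ' hse hpre
            subst hse
            rcases hshape with ⟨σ'', hs⟩ | ⟨σ'', hs, hr⟩
            · simp at hs
            · simp only [Step.env.injEq, Option.some.injEq] at hs
              subst hs
              rcases hpre with ⟨_, hσ⟩ | ⟨j, hj, _⟩
              · subst hσ; rw [hinit]; exact hr
              · simp at hj
        · obtain ⟨j, rfl⟩ : ∃ j, i = j + 1 := ⟨i - 1, by omega⟩
          rw [hsteps (j + 1), if_neg (by omega)] at hst
          have hst₂ : tr₂.steps j = some st := by
            have : j + 1 - 1 = j := by omega
            rwa [this] at hst
          have IH' := IH j (by omega) tr₂ htr₂ st hst₂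
          refine ⟨IH'.1, ?_⟩
          intro σ σ' hse hpre
          apply IH'.2 σ σ' hse
          rcases hpre with ⟨hj0, _⟩ | ⟨k, hk, hkstep⟩
          · simp at hj0
          · have hkj : k = j := by omega
            subst hkj
            cases k with
            | zero =>
              have h0 : tr.steps 0 = tr₁.steps 0 := by
                rw [hsteps 0, if_pos (by norm_num)]
              rcases hlast with ⟨hl0, _⟩ | ⟨m, s, hlm, hms, hmval⟩
              · exact absurd (hasLength_unique hl0 hlt1) (by norm_num)
              · have hm0 : m = 0 := by
                  have := hasLength_unique hlm hlt1; omega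
                subst hm0
                left
                refine ⟨rfl, ?_⟩
                rcases hkstep with h2 | h2 <;> rcases hmval with h3 | h3 <;>
                  rw [h0, hms, h3] at h2 <;> simp at h2 <;> exact h2.symm
            | succ k' =>
              right
              refine ⟨k', rfl, ?_⟩
              have heq : tr.steps (k' + 1) = tr₂.steps k' := by
                rw [hsteps (k' + 1), if_neg (by omega)]
                exact rfl
              rw [heq] at hkstep
              exact hkstep
    · exfalso
      rw [Set.mem_setOf_eq] at hempty
      rw [hempty] at hst
      simp [emptySeq] at hst

lemma eguar_sub_EG {r : Set (S × S)} : eguarC (S := S) r ⊆ EG r := by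
  rintro tr ⟨x, hx, htr⟩
  intro i st hst
  exact omega_sub_EG hx i tr htr st hst

lemma steps_none_of_le {tr : Trace S} {k : ℕ} (h : tr.steps k = none) :
    ∀ i, k ≤ i → tr.steps i = none := by
  intro i hki
  induction i with
  | zero =>
    have : k = 0 := Nat.le_zero.mp hki
    exact this ▸ h
  | succ n ihn =>
    rcases Nat.lt_or_ge k (n + 1) with h1 | h1
    · have hn := ihn (by omega)
      by_contra hc
      have h2 : (tr.steps (n + 1)).isSome := Option.ne_none_iff_isSome.mp hc
      have h3 := tr.closed n h2
      rw [hn] at h3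
      simp at h3
    · have : k = n + 1 := by omega
      exact this ▸ h

def oneTrace (σ0 : S) (a : Step S) : Trace S where
  init := σ0
  steps := seq1 a
  closed := by intro i hi; simp [seq1] at hi
  wf := by intro i st h _; simp [seq1]

def twoTrace (σ0 : S) (a : Step S) (hna : ¬ a.isTerminal) : Trace S where
  init := σ0
  steps := seq2 a Step.term
  closed := by
    intro i hi
    match i with
    | 0 => simp [seq2]
    | 1 => simp [seq2] at hi
    | (n + 2) => simp [seq2] at hi
  wf := by
    intro i st hs hterm
    match i with
    | 0 =>
      exfalso
      apply hna
      have : a = st := by simpa [seq2] using hs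
      rw [this]; exact hterm
    | 1 => simp [seq2]
    | (n + 2) => simp [seq2] at hs

def tailTrace (tr : Trace S) (σ : S) : Trace S where
  init := σ
  steps := fun i => tr.steps (i + 1)
  closed := fun i hi => tr.closed (i + 1) hi
  wf := fun i st h ht => tr.wf (i + 1) st h ht

lemma EG_sub_F {r : Set (S × S)} :
    EG (S := S) r ⊆
      choice (NilC S) (seqComp (choice (Pi Set.univ) (EpsBot r)) (EG r)) := by
  intro tr htr
  cases h0 : tr.steps 0 with
  | none =>
    right
    show tr.steps = emptySeq S
    funext i
    exact steps_none_of_le h0 i (Nat.zero_le i)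
  | some a =>
    have key : ∀ σ : S, (a = Step.prog (some σ) ∨ a = Step.env (some σ)) →
        tr ∈ choice (NilC S)
          (seqComp (choice (Pi Set.univ) (EpsBot r)) (EG r)) := by
      intro σ ha
      have hσinit : a = Step.env (some σ) → (tr.init, σ) ∈ r := by
        intro h
        exact (htr 0 a h0).2 tr.init σ h (Or.inl ⟨rfl, rfl⟩)
      have hna : ¬ a.isTerminal := by
        rcases ha with h | h <;> subst h <;> exact fun hh => hh
      -- the singleton step trace is a terminating trace of the body
      have h₁c : twoTrace tr.init a hna ∈ choice (Pi (S := S) Set.univ) (EpsBot r) := by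
        rcases ha with h | h
        · exact Or.inl (Or.inl (Or.inl (Or.inl
            ⟨(tr.init, σ), trivial, rfl, by show seq2 a _ = _; rw [h]⟩)))
        · exact Or.inl (Or.inr (Or.inl (Or.inl (Or.inl
            ⟨(tr.init, σ), hσinit h, rfl, by show seq2 a _ = _; rw [h]⟩))))
      have hlen1 : HasLength (oneTrace tr.init a).steps 1 := by
        intro i
        by_cases h : i = 0
        · simp [oneTrace, seq1, h]
        · simp [oneTrace, seq1, h, Nat.lt_one_iff]
      have hterm₁ : oneTrace tr.init a ∈
          terminating (choice (Pi (S := S) Set.univ) (EpsBot r)) := by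
        refine ⟨twoTrace tr.init a hna, h₁c, rfl, 1, hlen1, ?_, ?_, ?_⟩
        · intro i hi
          have : i = 0 := by omega
          subst this
          simp [twoTrace, oneTrace, seq1, seq2]
        · simp [twoTrace, seq2]
        · intro i
          match i with
          | 0 => simp [twoTrace, seq2]
          | 1 => simp [twoTrace, seq2]
          | (n + 2) => simp [twoTrace, seq2]
      have htr₂ : tailTrace tr σ ∈ EG r := by
        intro i st hst
        have h := htr (i + 1) st hst
        refine ⟨h.1, ?_⟩
        intro σ₀ σ' hse hpre
        apply h.2 σ₀ σ' hse
        rcases hpre with ⟨hi0, hσ⟩ | ⟨j, hij, hstep⟩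
        · subst hi0
          have hσ' : σ₀ = σ := hσ
          subst hσ'
          right
          refine ⟨0, rfl, ?_⟩
          rcases ha with h' | h'
          · left; rw [h0, h']
          · right; rw [h0, h']
        · subst hij
          right
          exact ⟨j + 1, rfl, hstep⟩
      -- assemble
      refine Or.inl (Or.inr (Or.inr ⟨oneTrace tr.init a, hterm₁, tailTrace tr σ, htr₂,
        1, hlen1, ?_, rfl, ?_⟩))
      · right
        refine ⟨0, a, hlen1, by simp [oneTrace, seq1], ?_⟩
        rcases ha with h' | h'
        · left; rw [h']; rfl
        · right; rw [h']; rfl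
      · intro i
        match i with
        | 0 => rw [if_pos (by norm_num)]; simp [oneTrace, seq1]; exact h0
        | (n + 1) =>
          rw [if_neg (by omega)]
          rfl
    cases a with
    | term =>
      have h1 : tr.steps 1 = none := tr.wf 0 _ h0 trivial
      refine Or.inl (Or.inl (Or.inl ⟨trivial, ?_⟩))
      funext i
      match i with
      | 0 => rw [h0]; simp [seq1]
      | (n + 1) =>
        rw [steps_none_of_le h1 (n + 1) (by omega)]
        simp [seq1]
    | prog o =>
      cases o with
      | none => exact absurd rfl (htr 0 _ h0).1
      | some σ => exact key σ (Or.inl rfl)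
    | env o =>
      cases o with
      | some σ => exact key σ (Or.inr rfl)
      | none =>
        have h1 : tr.steps 1 = none := tr.wf 0 _ h0 trivial
        have hsteq : tr.steps = seq1 (Step.env none) := by
          funext i
          match i with
          | 0 => rw [h0]; simp [seq1]
          | (n + 1) =>
            rw [steps_none_of_le h1 (n + 1) (by omega)]
            simp [seq1]
        have hEab : tr ∈ EAbortC S := Or.inl hsteq
        have hc : tr ∈ choice (Pi (S := S) Set.univ) (EpsBot r) :=
          Or.inl (Or.inr (Or.inr hEab))
        have hnt : tr ∉ terminated (choice (Pi (S := S) Set.univ) (EpsBot r)) := by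
          rintro ⟨_, t, n, _, _, hn, _⟩
          rw [hsteq] at hn
          unfold seq1 at hn
          split_ifs at hn with hcnd
          simp at hn
        exact Or.inl (Or.inr (Or.inl (Or.inl ⟨hc, hnt⟩)))

lemma EG_sub_eguar {r : Set (S × S)} : EG (S := S) r ⊆ eguarC r := by
  intro tr htr
  exact ⟨EG r, EG_sub_F, htr⟩

lemma eguar_eq_EG (r : Set (S × S)) : eguarC (S := S) r = EG r :=
  le_antisymm eguar_sub_EG EG_sub_eguar

end Aux2
section Aux3

variable {S : Type}

lemma eguar_progbot {r : Set (S × S)} {tr : Trace S} (h : tr ∈ eguarC r) (i : ℕ) :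
    tr.steps i ≠ some (Step.prog none) := by
  intro hc
  exact (eguar_sub_EG h i _ hc).1 rfl

lemma aborting_eguar {r : Set (S × S)} : aborting (eguarC (S := S) r) = ∅ :=
  aborting_empty (fun tr h i => eguar_progbot h i)

lemma terminating_eguar_progbot {r : Set (S × S)} {tr : Trace S}
    (h : tr ∈ terminating (eguarC r)) (i : ℕ) :
    tr.steps i ≠ some (Step.prog none) := by
  obtain ⟨tr', htr', _, n, hlt, hagree, _, _⟩ := h
  intro hc
  have hi : i < n := (hlt i).mp (by rw [hc]; rfl)
  have h2 : tr'.steps i = some (Step.prog none) := by rw [hagree i hi]; exact hc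
  exact eguar_progbot htr' i h2

lemma eps_no_progbot {g : Set (S × S)} {tr : Trace S} (h : tr ∈ Eps g) (i : ℕ) :
    tr.steps i ≠ some (Step.prog none) := by
  intro hc
  rcases eps_char tr h i _ hc with ⟨_, σ', hs, _⟩ | ⟨_, hs⟩ <;> simp at hs

lemma eps_terminating_char {g : Set (S × S)} {tr : Trace S}
    (h : tr ∈ terminating (Eps g)) :
    HasLength tr.steps 1 ∧
      ∃ σ', tr.steps 0 = some (Step.env (some σ')) ∧ (tr.init, σ') ∈ g := by
  obtain ⟨tr', htr', hinit, n, hlt, hagree, hn, hlen⟩ := h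
  rcases eps_char tr' htr' n _ hn with ⟨h0, σ', hs, _⟩ | ⟨h1, _⟩
  · simp at hs
  · subst h1
    have h0some : (tr'.steps 0).isSome := (hlen 0).mpr (by norm_num)
    obtain ⟨st, hst⟩ := Option.isSome_iff_exists.mp h0some
    rcases eps_char tr' htr' 0 st hst with ⟨_, σ', hs, hr⟩ | ⟨h01, _⟩
    · subst hs
      refine ⟨hlt, σ', ?_, by rw [← hinit]; exact hr⟩
      rw [← hagree 0 one_pos]; exact hst
    · simp at h01

lemma eguar_sub_rely {r : Set (S × S)} : eguarC (S := S) r ⊆ relyC r := by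
  intro tr htr
  by_cases hterm : tr ∈ terminated (eguarC r)
  · obtain ⟨_, t, n, hlt, hagree, hn, hlen⟩ := hterm
    have hclosed : ∀ i, (t (i + 1)).isSome → (t i).isSome := by
      intro i hi
      have h1 : i + 1 < n := (hlt (i + 1)).mp hi
      exact (hlt i).mpr (by omega)
    have hwf : ∀ i st, t i = some st → st.isTerminal → t (i + 1) = none := by
      intro i st hst hterm'
      exfalso
      have hi : i < n := (hlt i).mp (by rw [hst]; rfl)
      have h1 : tr.steps i = some st := by rw [hagree i hi]; exact hst
      have h2 := tr.wf i st h1 hterm'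
      have h3 : (tr.steps (i + 1)).isSome := (hlen (i + 1)).mpr (by omega)
      rw [h2] at h3; simp at h3
    set tr₁ : Trace S := ⟨tr.init, t, hclosed, hwf⟩ with htr₁def
    have htr₁ : tr₁ ∈ terminating (eguarC r) :=
      ⟨tr, htr, rfl, n, hlt, hagree, hn, hlen⟩
    have hσL : ∃ σL, LastState tr₁ σL := by
      cases n with
      | zero => exact ⟨tr.init, Or.inl ⟨hlt, rfl⟩⟩
      | succ m =>
        have hm : (t m).isSome := (hlt m).mpr (by omega)
        obtain ⟨s, hs⟩ := Option.isSome_iff_exists.mp hm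
        have hsnt : ¬ s.isTerminal := by
          intro hterm'
          have h1 : tr.steps m = some s := by rw [hagree m (by omega)]; exact hs
          have h2 := tr.wf m s h1 hterm'
          have h3 : (tr.steps (m + 1)).isSome := (hlen (m + 1)).mpr (by omega)
          rw [h2] at h3; simp at h3
        cases s with
        | term => exact absurd trivial hsnt
        | prog o =>
          cases o with
          | none => exact absurd trivial hsnt
          | some σ => exact ⟨σ, Or.inr ⟨m, _, hlt, hs, Or.inl rfl⟩⟩
        | env o =>
          cases o with
          | none => exact absurd trivial hsnt
          | some σ => exact ⟨σ, Or.inr ⟨m, _, hlt, hs, Or.inr rfl⟩⟩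
    obtain ⟨σL, hlast⟩ := hσL
    have htr₂ : oneTrace σL Step.term ∈ NilC S := Or.inl ⟨trivial, rfl⟩
    refine Or.inr ⟨tr₁, htr₁, oneTrace σL Step.term, Or.inl (Or.inl htr₂),
      n, hlt, hlast, rfl, ?_⟩
    intro i
    rcases Nat.lt_trichotomy i n with hi | hi | hi
    · rw [if_pos hi]
      exact hagree i hi
    · subst hi
      rw [if_neg (lt_irrefl i)]
      show tr.steps i = seq1 Step.term (i - i)
      rw [Nat.sub_self]
      simpa [seq1] using hn
    · rw [if_neg (by omega)]
      have hnone : tr.steps i = none := by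
        by_contra hc
        have := (hlen i).mp (Option.ne_none_iff_isSome.mp hc)
        omega
      rw [hnone]
      show (none : Option (Step S)) = seq1 Step.term (i - n)
      rw [seq1, if_neg (by omega)]
  · exact Or.inl (Or.inl ⟨htr, hterm⟩)

lemma aborting_rely_eguar {r : Set (S × S)} :
    aborting (relyC (S := S) r) ∩ eguarC r = ∅ := by
  ext tr
  simp only [Set.mem_inter_iff, Set.mem_empty_iff_false, iff_false, not_and]
  rintro ⟨tr', htr', hinit, m, hltm, hagreem, hm, hlenm⟩ htrE'
  have htrE := eguar_sub_EG htrE'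
  rcases htr' with (hA | hB) | hC
  · exact eguar_progbot hA.1 m hm
  · obtain ⟨t', ht', _, _⟩ := hB
    obtain ⟨t'', ht'', _, n', _, _, hn', _⟩ := ht'
    exact eguar_progbot ht''.1 n' hn'
  · obtain ⟨tr₁, htr₁, tr₂, htr₂, n, hlen1, hlast, hinit', hsteps⟩ := hC
    have hmn : n ≤ m := by
      by_contra hlt
      push_neg at hlt
      have h1 : tr₁.steps m = some (Step.prog none) := by
        have h2 := hsteps m
        rw [if_pos hlt] at h2
        rw [← h2]; exact hm
      exact terminating_eguar_progbot htr₁ m h1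
    have htr₂step : tr₂.steps (m - n) = some (Step.prog none) := by
      have h2 := hsteps m
      rw [if_neg (by omega)] at h2
      rw [← h2]; exact hm
    rcases htr₂ with (hNil | hsc) | hEmp
    · obtain ⟨_, hT⟩ := nil_char tr₂ hNil (m - n) _ htr₂step
      simp at hT
    · rcases hsc with (hE | hAb) | hcat₂
      · exact eps_no_progbot hE.1 (m - n) htr₂step
      · obtain ⟨t', ht', _, _⟩ := hAb
        obtain ⟨t'', ht'', _, n', _, _, hn', _⟩ := ht'
        exact eps_no_progbot ht''.1 n' hn'
      · obtain ⟨u₁, hu₁, u₂, _, n₂, hlenu, hlastu, hinitu, hstepsu⟩ := hcat₂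
        obtain ⟨hlu1, σ', hu0, hσ'⟩ := eps_terminating_char hu₁
        have hn₂ : n₂ = 1 := hasLength_unique hlenu hlu1
        subst hn₂
        have h20 : tr₂.steps 0 = some (Step.env (some σ')) := by
          rw [hstepsu 0, if_pos (by norm_num)]
          exact hu0
        have hnm : n < m := by
          rcases Nat.eq_or_lt_of_le hmn with heq | h
          · exfalso
            have hmn0 : m - n = 0 := by omega
            rw [hmn0, h20] at htr₂step
            simp at htr₂step
          · exact h
        have htn : tr.steps n = some (Step.env (some σ')) := by
          rw [← hagreem n hnm, hsteps n, if_neg (lt_irrefl n), Nat.sub_self]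
          exact h20
        have hpre : PreAt tr n tr₂.init := by
          cases n with
          | zero =>
            refine Or.inl ⟨rfl, ?_⟩
            rcases hlast with ⟨hl0, hσ⟩ | ⟨k, s, hlk, _, _⟩
            · rw [hσ, ← hinit', hinit]
            · exact absurd (hasLength_unique hlk hlen1) (by omega)
          | succ j =>
            rcases hlast with ⟨hl0, _⟩ | ⟨k, s, hlk, hks, hkval⟩
            · exact absurd (hasLength_unique hl0 hlen1) (by omega)
            · have hk : k = j := by
                have := hasLength_unique hlk hlen1; omega
              subst hk
              right
              refine ⟨k, rfl, ?_⟩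
              have hj : tr.steps k = some s := by
                rw [← hagreem k (by omega), hsteps k, if_pos (by omega)]
                exact hks
              rcases hkval with h | h
              · left; rw [hj, h]
              · right; rw [hj, h]
        have hr := (htrE n _ htn).2 tr₂.init σ' rfl hpre
        rw [← hinitu] at hσ'
        exact hσ' hr
    · rw [Set.mem_setOf_eq] at hEmp
      rw [hEmp] at htr₂step
      simp [emptySeq] at htr₂step

end Aux3

/-- The environment guard absorbs its own rely: `eguar(r) ⋒ rely(r) = eguar(r)`. -/
theorem eguar_wconj_rely {S : Type} (r : Set (S × S)) :
    wconj (eguarC r) (relyC r) = eguarC r := by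
  have h1 : eguarC r ∩ relyC r = eguarC r := Set.inter_eq_left.mpr eguar_sub_rely
  have h2 : abortFirst (eguarC r) (relyC r) = ∅ := by
    unfold abortFirst
    rw [aborting_eguar]
    simp [abortComplete]
  have h3 : abortFirst (relyC r) (eguarC r) = ∅ := by
    unfold abortFirst
    rw [aborting_rely_eguar]
    simp [abortComplete]
  unfold wconj
  rw [h1, h2, h3]
  simp

end Aczel
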